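/- arXiv:2301.03000 — 2 statements merged into one kernel-verified Lean document; each statement's English description precedes it below -/
import Mathlib

section
/- Let $U$ be a random element of $SO(d+1)$ independent of a random element $X$ of $\mathbb{S}^d$, with $\mathbb{E}(D^l_{rs}(U)) = \tilde\phi^l_{rs}(f_U)$ where $\tilde\phi^l(f_U)$ is invertible. Then for the deconvolution kernel $K_T$, the hyperspherical unbiased scoring property holds: $\mathbb{E}(K_T(x, UX) \mid X) = K^*_T(x, X)$ almost surely, where $K^*_T(x, x^*) = \sum_{l=0}^{[T]}\sum_{q=1}^{N(d,l)} \overline{B^l_q(x^*)} B^l_q(x)$. -/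
open MeasureTheory

/-- Hyperspherical unbiased scoring property: with `U ∼ μ` independent of `X`, for every
value `xstar` of `X`, `E(K_T(x, U·xstar)) = K*_T(x, xstar)`, i.e.
`∫ K_T(x, u • xstar) dμ(u) = ∑_{l ≤ T} ∑_q conj(B^l_q xstar) B^l_q x`.  Here
`D l r s u` are the rotation matrix entries with `conj(B^l_r(u x)) = ∑_s D^l_{rs}(u) conj(B^l_s x)`,
`phiU l r s = ∫ D^l_{rs}(u) dμ(u)` is the rotational Fourier transform of `f_U`, and
`Ainv` is its matrix inverse. -/
theorem unbiased_scoring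
    {S G : Type*} [MeasurableSpace G]
    (μ : Measure G) [IsProbabilityMeasure μ]
    (smul : G → S → S)
    (Nd : ℕ → ℕ) (B : ℕ → ℕ → S → ℂ)
    (D : ℕ → ℕ → ℕ → G → ℂ) (phiU : ℕ → ℕ → ℕ → ℂ) (Ainv : ℕ → ℕ → ℕ → ℂ)
    (hD : ∀ (l r : ℕ), r ∈ Finset.range (Nd l) → ∀ (u : G) (x : S),
      (starRingEnd ℂ) (B l r (smul u x))
        = ∑ s ∈ Finset.range (Nd l), D l r s u * (starRingEnd ℂ) (B l s x))
    (hDint : ∀ l r s : ℕ, Integrable (D l r s) μ)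
    (hphiU : ∀ l r s : ℕ, ∫ u, D l r s u ∂μ = phiU l r s)
    (hAinv : ∀ l q s : ℕ, q ∈ Finset.range (Nd l) → s ∈ Finset.range (Nd l) →
      ∑ r ∈ Finset.range (Nd l), Ainv l q r * phiU l r s = if q = s then 1 else 0)
    (T : ℕ) (x xstar : S) :
    (∫ u, (∑ l ∈ Finset.range (T + 1), ∑ q ∈ Finset.range (Nd l),
        (∑ r ∈ Finset.range (Nd l),
          Ainv l q r * (starRingEnd ℂ) (B l r (smul u xstar))) * B l q x) ∂μ)
      = ∑ l ∈ Finset.range (T + 1), ∑ q ∈ Finset.range (Nd l),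
          (starRingEnd ℂ) (B l q xstar) * B l q x := by
  have hrw : ∀ u : G,
      (∑ l ∈ Finset.range (T + 1), ∑ q ∈ Finset.range (Nd l),
        (∑ r ∈ Finset.range (Nd l),
          Ainv l q r * (starRingEnd ℂ) (B l r (smul u xstar))) * B l q x)
      = ∑ l ∈ Finset.range (T + 1), ∑ q ∈ Finset.range (Nd l),
          ∑ r ∈ Finset.range (Nd l), ∑ s ∈ Finset.range (Nd l),
            D l r s u * (Ainv l q r * (starRingEnd ℂ) (B l s xstar) * B l q x) := by
    intro u
    refine Finset.sum_congr rfl fun l _ => Finset.sum_congr rfl fun q _ => ?_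
    rw [Finset.sum_mul]
    refine Finset.sum_congr rfl fun r hr => ?_
    rw [hD l r hr u xstar, Finset.mul_sum, Finset.sum_mul]
    refine Finset.sum_congr rfl fun s _ => ?_
    ring
  simp_rw [hrw]
  rw [integral_finset_sum _ (fun l _ => integrable_finset_sum _
    (fun q _ => integrable_finset_sum _ (fun r _ => integrable_finset_sum _
      (fun s _ => (hDint l r s).mul_const _))))]
  refine Finset.sum_congr rfl fun l hl => ?_
  rw [integral_finset_sum _ (fun q _ => integrable_finset_sum _
    (fun r _ => integrable_finset_sum _ (fun s _ => (hDint l r s).mul_const _)))]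
  refine Finset.sum_congr rfl fun q hq => ?_
  rw [integral_finset_sum _ (fun r _ => integrable_finset_sum _
    (fun s _ => (hDint l r s).mul_const _))]
  have : ∀ r, (∫ u, ∑ s ∈ Finset.range (Nd l),
      D l r s u * (Ainv l q r * (starRingEnd ℂ) (B l s xstar) * B l q x) ∂μ)
      = ∑ s ∈ Finset.range (Nd l),
          phiU l r s * (Ainv l q r * (starRingEnd ℂ) (B l s xstar) * B l q x) := by
    intro r
    rw [integral_finset_sum _ (fun s _ => (hDint l r s).mul_const _)]
    refine Finset.sum_congr rfl fun s _ => ?_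
    rw [integral_mul_const, hphiU]
  simp_rw [this]
  rw [Finset.sum_comm]
  have key : ∀ s ∈ Finset.range (Nd l),
      (∑ r ∈ Finset.range (Nd l),
        phiU l r s * (Ainv l q r * (starRingEnd ℂ) (B l s xstar) * B l q x))
      = (if q = s then 1 else 0) * ((starRingEnd ℂ) (B l s xstar) * B l q x) := by
    intro s hs
    rw [← hAinv l q s hq hs, Finset.sum_mul]
    refine Finset.sum_congr rfl fun r _ => ?_
    ring
  rw [Finset.sum_congr rfl key]
  simp [Finset.sum_ite_eq, hq]
end

section
/- Suppose there exists $c > 0$ such that $\|(\tilde\phi^l(f_U))^{-1}\|_{op} \le c\, \sigma_{\min}((\tilde\phi^l(f_U))^{-1})$ for all $l \ge 0$, where $\sigma_{\min}$ denotes the minimum singular value. Then $\int_{\mathbb{S}^d} |K_T(x,z)|^2 d\nu(z) \ge c^{-2} (\nu(\mathbb{S}^d))^{-1} \sum_{l=0}^{[T]} N(d,l)\, \|(\tilde\phi^l(f_U))^{-1}\|_{op}^2$ for every $x \in \mathbb{S}^d$. -/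
open MeasureTheory

/-- Lower bound for the integrated squared deconvolution kernel: if
`‖(φ̃^l(f_U))⁻¹‖_op ≤ c σ_min((φ̃^l(f_U))⁻¹)` for all `l` (condition (C)), then
`∫ |K_T(x,z)|² dν(z) ≥ c⁻² ν(𝕊^d)⁻¹ ∑_{l ≤ T} N(d,l) ‖(φ̃^l(f_U))⁻¹‖_op²` for every `x`.
Here `a l` is the operator norm and `σmin l` the minimum singular value of
`(φ̃^l(f_U))⁻¹`, encoded via `hσ : ‖Aᵀv‖ ≥ σ_min(A)‖v‖`; `hadd` is the addition theorem
and `horth` orthonormality of the spherical harmonic basis. -/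
theorem kernel_L2_lower_bound
    {S : Type*} [MeasurableSpace S] (ν : Measure S) [IsFiniteMeasure ν]
    (Nd : ℕ → ℕ) (B : ℕ → ℕ → S → ℂ) (Ainv : ℕ → ℕ → ℕ → ℂ)
    (a σmin : ℕ → ℝ) (ha : ∀ l, 0 ≤ a l) (hσ0 : ∀ l, 0 ≤ σmin l)
    (c : ℝ) (hc : 0 < c)
    (hC : ∀ l : ℕ, a l ≤ c * σmin l)
    (hσ : ∀ (l : ℕ) (v : ℕ → ℂ),
      σmin l ^ 2 * ∑ q ∈ Finset.range (Nd l), ‖v q‖ ^ 2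
        ≤ ∑ r ∈ Finset.range (Nd l), ‖∑ q ∈ Finset.range (Nd l), v q * Ainv l q r‖ ^ 2)
    (horth : ∀ l q l' q' : ℕ, q ∈ Finset.range (Nd l) → q' ∈ Finset.range (Nd l') →
      ∫ z, (starRingEnd ℂ) (B l q z) * B l' q' z ∂ν = if l = l' ∧ q = q' then 1 else 0)
    (hint : ∀ l q l' q' : ℕ,
      Integrable (fun z => (starRingEnd ℂ) (B l q z) * B l' q' z) ν)
    (hadd : ∀ (l : ℕ) (y : S),
      ∑ q ∈ Finset.range (Nd l), ‖B l q y‖ ^ 2 = (Nd l : ℝ) / (ν Set.univ).toReal)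
    (T : ℕ) (x : S) :
    c⁻¹ ^ 2 * ((ν Set.univ).toReal)⁻¹
        * ∑ l ∈ Finset.range (T + 1), (Nd l : ℝ) * a l ^ 2
      ≤ ∫ z, ‖∑ l ∈ Finset.range (T + 1), ∑ q ∈ Finset.range (Nd l),
          ∑ r ∈ Finset.range (Nd l),
            B l q x * Ainv l q r * (starRingEnd ℂ) (B l r z)‖ ^ 2 ∂ν := by
  classical
  have hνinv0 : (0:ℝ) ≤ ((ν Set.univ).toReal)⁻¹ := inv_nonneg.2 ENNReal.toReal_nonneg
  set s : Finset ((_ : ℕ) × ℕ) :=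
    (Finset.range (T+1)).sigma fun l => Finset.range (Nd l) with hs
  set C : (_ : ℕ) × ℕ → ℂ :=
    fun p => ∑ q ∈ Finset.range (Nd p.1), B p.1 q x * Ainv p.1 q p.2 with hCdef
  have hK : ∀ z, (∑ l ∈ Finset.range (T + 1), ∑ q ∈ Finset.range (Nd l),
          ∑ r ∈ Finset.range (Nd l),
            B l q x * Ainv l q r * (starRingEnd ℂ) (B l r z))
      = ∑ p ∈ s, C p * (starRingEnd ℂ) (B p.1 p.2 z) := by
    intro z
    rw [hs, Finset.sum_sigma]
    refine Finset.sum_congr rfl fun l _ => ?_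
    rw [Finset.sum_comm]
    exact Finset.sum_congr rfl fun r _ => (Finset.sum_mul ..).symm
  have hre : ∀ w : ℂ, (w * (starRingEnd ℂ) w).re = ‖w‖ ^ 2 := by
    intro w
    rw [Complex.mul_conj]
    rw [Complex.ofReal_re, Complex.normSq_eq_norm_sq]
  have key : ∫ z, ‖∑ p ∈ s, C p * (starRingEnd ℂ) (B p.1 p.2 z)‖ ^ 2 ∂ν
      = ∑ p ∈ s, ‖C p‖ ^ 2 := by
    have hexp : ∀ z, (‖∑ p ∈ s, C p * (starRingEnd ℂ) (B p.1 p.2 z)‖ ^ 2 : ℝ)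
        = (∑ p ∈ s, ∑ p' ∈ s, C p * (starRingEnd ℂ) (C p') *
            ((starRingEnd ℂ) (B p.1 p.2 z) * B p'.1 p'.2 z)).re := by
      intro z
      rw [← hre]
      congr 1
      rw [map_sum, Finset.sum_mul_sum]
      refine Finset.sum_congr rfl fun p _ => Finset.sum_congr rfl fun p' _ => ?_
      simp only [map_mul, Complex.conj_conj]
      ring
    have hIntTerm : ∀ p ∈ s, ∀ p' ∈ s,
        Integrable (fun z => C p * (starRingEnd ℂ) (C p') *
          ((starRingEnd ℂ) (B p.1 p.2 z) * B p'.1 p'.2 z)) ν :=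
      fun p _ p' _ => (hint p.1 p.2 p'.1 p'.2).const_mul _
    have hIntG : Integrable (fun z => ∑ p ∈ s, ∑ p' ∈ s,
        C p * (starRingEnd ℂ) (C p') *
          ((starRingEnd ℂ) (B p.1 p.2 z) * B p'.1 p'.2 z)) ν :=
      integrable_finset_sum _ fun p hp =>
        integrable_finset_sum _ fun p' hp' => hIntTerm p hp p' hp'
    calc ∫ z, ‖∑ p ∈ s, C p * (starRingEnd ℂ) (B p.1 p.2 z)‖ ^ 2 ∂ν
        = ∫ z, (∑ p ∈ s, ∑ p' ∈ s, C p * (starRingEnd ℂ) (C p') *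
            ((starRingEnd ℂ) (B p.1 p.2 z) * B p'.1 p'.2 z)).re ∂ν := by
          simp only [hexp]
      _ = (∫ z, ∑ p ∈ s, ∑ p' ∈ s, C p * (starRingEnd ℂ) (C p') *
            ((starRingEnd ℂ) (B p.1 p.2 z) * B p'.1 p'.2 z) ∂ν).re := by
          exact integral_re hIntG
      _ = (∑ p ∈ s, ∑ p' ∈ s, C p * (starRingEnd ℂ) (C p') *
            (∫ z, (starRingEnd ℂ) (B p.1 p.2 z) * B p'.1 p'.2 z ∂ν)).re := by
          rw [integral_finset_sum _ (fun p hp =>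
            integrable_finset_sum _ fun p' hp' => hIntTerm p hp p' hp')]
          congr 1
          refine Finset.sum_congr rfl fun p hp => ?_
          rw [integral_finset_sum _ (fun p' hp' => hIntTerm p hp p' hp')]
          exact Finset.sum_congr rfl fun p' _ => integral_const_mul _ _
      _ = (∑ p ∈ s, C p * (starRingEnd ℂ) (C p)).re := by
          congr 1
          refine Finset.sum_congr rfl fun p hp => ?_
          have hmem : ∀ r : (_ : ℕ) × ℕ, r ∈ s →
              r.1 ∈ Finset.range (T+1) ∧ r.2 ∈ Finset.range (Nd r.1) := by
            intro r hr
            rw [hs, Finset.mem_sigma] at hr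
            exact hr
          rw [Finset.sum_eq_single p]
          · rw [horth p.1 p.2 p.1 p.2 (hmem p hp).2 (hmem p hp).2]
            simp
          · intro p' hp' hne
            rw [horth p.1 p.2 p'.1 p'.2 (hmem p hp).2 (hmem p' hp').2]
            have : ¬ (p.1 = p'.1 ∧ p.2 = p'.2) := by
              rintro ⟨h1, h2⟩
              apply hne
              obtain ⟨l, q⟩ := p; obtain ⟨l', q'⟩ := p'
              simp only at h1 h2
              subst h1; subst h2; rfl
            simp [this]
          · intro h; exact absurd hp h
      _ = ∑ p ∈ s, ‖C p‖ ^ 2 := by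
          rw [Complex.re_sum]
          exact Finset.sum_congr rfl fun p _ => hre _
  simp only [hK]
  rw [key, hs, Finset.sum_sigma, Finset.mul_sum]
  refine Finset.sum_le_sum fun l _ => ?_
  have h1 := hσ l (fun q => B l q x)
  rw [hadd l x] at h1
  have h3 : a l ^ 2 ≤ c ^ 2 * σmin l ^ 2 := by nlinarith [hC l, ha l, hσ0 l, hc]
  have h2 : c⁻¹ ^ 2 * a l ^ 2 ≤ σmin l ^ 2 := by
    have h4 : c⁻¹ ^ 2 * (c ^ 2 * σmin l ^ 2) = σmin l ^ 2 := by
      field_simp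
    nlinarith [mul_le_mul_of_nonneg_left h3 (sq_nonneg c⁻¹)]
  calc c⁻¹ ^ 2 * ((ν Set.univ).toReal)⁻¹ * ((Nd l : ℝ) * a l ^ 2)
      = (c⁻¹ ^ 2 * a l ^ 2) * ((Nd l : ℝ) * ((ν Set.univ).toReal)⁻¹) := by ring
    _ ≤ σmin l ^ 2 * ((Nd l : ℝ) * ((ν Set.univ).toReal)⁻¹) := by
        refine mul_le_mul_of_nonneg_right h2 ?_
        positivity
    _ = σmin l ^ 2 * ((Nd l : ℝ) / (ν Set.univ).toReal) := by
        rw [div_eq_mul_inv]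
    _ ≤ ∑ r ∈ Finset.range (Nd l), ‖∑ q ∈ Finset.range (Nd l),
          B l q x * Ainv l q r‖ ^ 2 := h1
    _ = ∑ r ∈ Finset.range (Nd l), ‖C ⟨l, r⟩‖ ^ 2 := rfl
end
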